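/- arXiv:1311.0665 — 6 statements merged into one kernel-verified Lean document; each statement's English description precedes it below -/
import Mathlib

section
/- Let {λ_{j,n}}_{n∈ℕ} ⊂ (0,∞) and {t_{j,n}}_{n∈ℕ} ⊂ ℝ, indexed by integers j ≥ 1, be arbitrary families of sequences. Then there exists a strictly increasing map σ : ℕ → ℕ such that for every j, k ≥ 1 and every T ∈ ℝ, the sequence n ↦ (λ_{j,σ(n)} T + t_{j,σ(n)} − t_{k,σ(n)})/λ_{k,σ(n)} converges to a limit in the extended reals [−∞, +∞]. -/
open Filter Topology

/-- Coercion `ℝ → EReal` sends `atTop` to `𝓝 ⊤`. -/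
lemma tendsto_coe_ereal_top {u : ℕ → ℝ} (h : Tendsto u atTop atTop) :
    Tendsto (fun n => (u n : EReal)) atTop (𝓝 ⊤) := by
  rw [EReal.tendsto_nhds_top_iff_real]
  intro x
  filter_upwards [h.eventually_gt_atTop x] with n hn
  exact_mod_cast hn

lemma tendsto_coe_ereal_bot {u : ℕ → ℝ} (h : Tendsto u atTop atBot) :
    Tendsto (fun n => (u n : EReal)) atTop (𝓝 ⊥) := by
  rw [EReal.tendsto_nhds_bot_iff_real]
  intro x
  filter_upwards [h.eventually_lt_atBot x] with n hn
  exact_mod_cast hn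

lemma tendsto_top_ereal_atTop {u : ℕ → ℝ}
    (h : Tendsto (fun n => (u n : EReal)) atTop (𝓝 ⊤)) : Tendsto u atTop atTop := by
  rw [EReal.tendsto_nhds_top_iff_real] at h
  rw [tendsto_atTop]
  intro x
  filter_upwards [h x] with n hn
  exact le_of_lt (by exact_mod_cast hn)

lemma tendsto_bot_ereal_atBot {u : ℕ → ℝ}
    (h : Tendsto (fun n => (u n : EReal)) atTop (𝓝 ⊥)) : Tendsto u atTop atBot := by
  rw [EReal.tendsto_nhds_bot_iff_real] at h
  rw [tendsto_atBot]
  intro x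
  filter_upwards [h x] with n hn
  exact le_of_lt (by exact_mod_cast hn)

/-- Claim A.1: after extraction of a subsequence, for all indices `j, k` and all real `T`,
the sequence `n ↦ (λ_{j,n} T + t_{j,n} − t_{k,n}) / λ_{k,n}` converges in the extended reals. -/
theorem extraction_all_limits_exist
    (lam t : ℕ → ℕ → ℝ) (hlam : ∀ j n, 0 < lam j n) :
    ∃ σ : ℕ → ℕ, StrictMono σ ∧
      ∀ j k : ℕ, ∀ T : ℝ, ∃ L : EReal,
        Tendsto
          (fun n => (((lam j (σ n) * T + t j (σ n) - t k (σ n)) / lam k (σ n) : ℝ) : EReal))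
          atTop (nhds L) := by
  -- First extraction: make `λ_j/λ_k`, `(t_j-t_k)/λ_k` and `(t_j - t_k)/λ_j` converge
  -- in `EReal` for all pairs.
  set F : ℕ → ((ℕ × ℕ) → EReal × EReal × EReal) := fun n p =>
    (((lam p.1 n / lam p.2 n : ℝ) : EReal),
      (((t p.1 n - t p.2 n) / lam p.2 n : ℝ) : EReal),
      (((t p.1 n - t p.2 n) / lam p.1 n : ℝ) : EReal))
    with hFdef
  obtain ⟨G, -, σ1, hσ1, hF⟩ :=
    isCompact_univ.tendsto_subseq (x := F) (fun n => Set.mem_univ _)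
  -- The "bad" time for each pair, where the first extraction gives no information.
  set Tpt : ℕ × ℕ → ℝ := fun p => -((G p).2.2.toReal) with hTptdef
  -- Second extraction: make the original quantity at the bad time converge for all pairs.
  set F2 : ℕ → ((ℕ × ℕ) → EReal) := fun n p =>
    (((lam p.1 (σ1 n) * Tpt p + t p.1 (σ1 n) - t p.2 (σ1 n)) / lam p.2 (σ1 n) : ℝ) : EReal)
    with hF2def
  obtain ⟨M, -, σ2, hσ2, hF2⟩ :=
    isCompact_univ.tendsto_subseq (x := F2) (fun n => Set.mem_univ _)
  refine ⟨σ1 ∘ σ2, hσ1.comp hσ2, ?_⟩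
  intro j k T
  set m : ℕ → ℕ := σ1 ∘ σ2 with hmdef
  have hm : ∀ n, 0 < lam j (m n) := fun n => hlam j _
  have hmk : ∀ n, 0 < lam k (m n) := fun n => hlam k _
  -- pointwise convergence at the pair (j,k)
  have hFp : Tendsto (fun n => F (m n) (j, k)) atTop (𝓝 (G (j, k))) := by
    have h1 : Tendsto (fun n => F (σ1 n) (j, k)) atTop (𝓝 (G (j, k))) :=
      ((continuous_apply (j, k)).tendsto _).comp hF
    exact h1.comp hσ2.tendsto_atTop
  have ha : Tendsto (fun n => ((lam j (m n) / lam k (m n) : ℝ) : EReal)) atTop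
      (𝓝 (G (j, k)).1) := (continuous_fst.tendsto _).comp hFp
  have hb : Tendsto (fun n => (((t j (m n) - t k (m n)) / lam k (m n) : ℝ) : EReal)) atTop
      (𝓝 (G (j, k)).2.1) := (continuous_fst.tendsto _).comp ((continuous_snd.tendsto _).comp hFp)
  have hc : Tendsto (fun n => (((t j (m n) - t k (m n)) / lam j (m n) : ℝ) : EReal)) atTop
      (𝓝 (G (j, k)).2.2) := (continuous_snd.tendsto _).comp ((continuous_snd.tendsto _).comp hFp)
  have hMp : Tendsto
      (fun n => (((lam j (m n) * Tpt (j, k) + t j (m n) - t k (m n)) / lam k (m n) : ℝ) : EReal))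
      atTop (𝓝 (M (j, k))) := ((continuous_apply (j, k)).tendsto _).comp hF2
  -- the key algebraic identities
  have key : ∀ n, (lam j (m n) * T + t j (m n) - t k (m n)) / lam k (m n)
      = (lam j (m n) / lam k (m n)) * (T + (t j (m n) - t k (m n)) / lam j (m n)) := by
    intro n
    have h1 := (hm n).ne'
    have h2 := (hmk n).ne'
    field_simp
    ring
  have key2 : ∀ n, (lam j (m n) * T + t j (m n) - t k (m n)) / lam k (m n)
      = (lam j (m n) / lam k (m n)) * T + (t j (m n) - t k (m n)) / lam k (m n) := by
    intro n
    have h2 := (hmk n).ne'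
    field_simp
    ring
  by_cases hatop : (G (j, k)).1 = ⊤
  · -- `λ_j/λ_k → ∞`
    have haT : Tendsto (fun n => lam j (m n) / lam k (m n)) atTop atTop :=
      tendsto_top_ereal_atTop (hatop ▸ ha)
    by_cases hctop : (G (j, k)).2.2 = ⊤
    · have hcT : Tendsto (fun n => (t j (m n) - t k (m n)) / lam j (m n)) atTop atTop :=
        tendsto_top_ereal_atTop (hctop ▸ hc)
      refine ⟨⊤, ?_⟩
      apply tendsto_coe_ereal_top
      simp only [key]
      exact haT.atTop_mul_atTop₀ (tendsto_atTop_add_const_left _ T hcT)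
    by_cases hcbot : (G (j, k)).2.2 = ⊥
    · have hcT : Tendsto (fun n => (t j (m n) - t k (m n)) / lam j (m n)) atTop atBot :=
        tendsto_bot_ereal_atBot (hcbot ▸ hc)
      refine ⟨⊥, ?_⟩
      apply tendsto_coe_ereal_bot
      simp only [key]
      exact haT.atTop_mul_atBot₀ (tendsto_atBot_add_const_left _ T hcT)
    · -- `c` is finite
      set c : ℝ := (G (j, k)).2.2.toReal with hcdef
      have hcoe : ((c : ℝ) : EReal) = (G (j, k)).2.2 := EReal.coe_toReal hctop hcbot
      have hcR : Tendsto (fun n => (t j (m n) - t k (m n)) / lam j (m n)) atTop (𝓝 c) := by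
        rw [← EReal.tendsto_coe]
        exact hcoe ▸ hc
      have hsum : Tendsto (fun n => T + (t j (m n) - t k (m n)) / lam j (m n)) atTop
          (𝓝 (T + c)) := tendsto_const_nhds.add hcR
      rcases lt_trichotomy (T + c) 0 with hTc | hTc | hTc
      · refine ⟨⊥, ?_⟩
        apply tendsto_coe_ereal_bot
        simp only [key]
        exact haT.atTop_mul_neg hTc hsum
      · -- bad point: `T = -c`, handled by the second extraction
        refine ⟨M (j, k), ?_⟩
        have hT : T = Tpt (j, k) := by
          simp only [hTptdef, ← hcdef]
          linarith
        rw [hT]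
        exact hMp
      · refine ⟨⊤, ?_⟩
        apply tendsto_coe_ereal_top
        simp only [key]
        exact haT.atTop_mul_pos hTc hsum
  · -- `λ_j/λ_k` has a finite limit (it cannot be `⊥` since the sequence is positive)
    have habot : (G (j, k)).1 ≠ ⊥ := by
      intro hbot
      have h0 : (0 : EReal) ≤ (G (j, k)).1 := by
        refine ge_of_tendsto ha ?_
        filter_upwards with n
        exact_mod_cast le_of_lt (div_pos (hm n) (hmk n))
      rw [hbot] at h0
      exact absurd h0 (by simp)
    set a : ℝ := (G (j, k)).1.toReal with hadef
    have hcoea : ((a : ℝ) : EReal) = (G (j, k)).1 := EReal.coe_toReal hatop habot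
    have haR : Tendsto (fun n => lam j (m n) / lam k (m n)) atTop (𝓝 a) := by
      rw [← EReal.tendsto_coe]
      exact hcoea ▸ ha
    have haRT : Tendsto (fun n => (lam j (m n) / lam k (m n)) * T) atTop (𝓝 (a * T)) :=
      haR.mul_const T
    by_cases hbtop : (G (j, k)).2.1 = ⊤
    · have hbT : Tendsto (fun n => (t j (m n) - t k (m n)) / lam k (m n)) atTop atTop :=
        tendsto_top_ereal_atTop (hbtop ▸ hb)
      refine ⟨⊤, ?_⟩
      apply tendsto_coe_ereal_top
      simp only [key2]
      exact haRT.add_atTop hbT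
    by_cases hbbot : (G (j, k)).2.1 = ⊥
    · have hbT : Tendsto (fun n => (t j (m n) - t k (m n)) / lam k (m n)) atTop atBot :=
        tendsto_bot_ereal_atBot (hbbot ▸ hb)
      refine ⟨⊥, ?_⟩
      apply tendsto_coe_ereal_bot
      simp only [key2]
      exact haRT.add_atBot hbT
    · set b : ℝ := (G (j, k)).2.1.toReal with hbdef
      have hcoeb : ((b : ℝ) : EReal) = (G (j, k)).2.1 := EReal.coe_toReal hbtop hbbot
      have hbR : Tendsto (fun n => (t j (m n) - t k (m n)) / lam k (m n)) atTop (𝓝 b) := by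
        rw [← EReal.tendsto_coe]
        exact hcoeb ▸ hb
      refine ⟨((a * T + b : ℝ) : EReal), ?_⟩
      rw [EReal.tendsto_coe]
      simp only [key2]
      exact haRT.add hbR
end

section
/- For each integer j ≥ 1, let scat(j) be a proposition, let T(j) ∈ (0, +∞] be an extended real, and let {λ_{j,n}}_{n∈ℕ} ⊂ (0,∞), {t_{j,n}}_{n∈ℕ} ⊂ ℝ be sequences. Assume that for all j, k ≥ 1 and all T ∈ ℝ the sequence n ↦ (λ_{j,n} T + t_{j,n} − t_{k,n})/λ_{k,n} converges to a limit L(j,k,T) ∈ [−∞, +∞]. Define the relation j ≼ k to hold if and only if scat(k) holds, or else scat(j) fails and for every real T < T(j) one has L(j,k,T) < T(k) (strict inequality in the extended reals). Then ≼ is a total preorder: (i) j ≼ j for all j; (ii) if j ≼ k and k ≼ ℓ then j ≼ ℓ; (iii) for all j, k, either j ≼ k or k ≼ j; (iv) defining j ≺ k as the negation of k ≼ j, one has j ≺ k if and only if j ≼ k holds and k ≼ j fails. -/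
open Filter Topology

/-- Claim 3.5: the relation `≼` on profile indices, defined from the scattering predicate,
the maximal forward times of existence and the limits of renormalized parameters, is a
total preorder. -/
theorem profile_relation_total_preorder
    (scat : ℕ → Prop) (Tmax : ℕ → EReal) (hTmax : ∀ j, 0 < Tmax j)
    (lam t : ℕ → ℕ → ℝ) (hlam : ∀ j n, 0 < lam j n)
    (L : ℕ → ℕ → ℝ → EReal)
    (hL : ∀ j k : ℕ, ∀ T : ℝ,
      Tendsto (fun n => (((lam j n * T + t j n - t k n) / lam k n : ℝ) : EReal))
        atTop (nhds (L j k T)))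
    (rel : ℕ → ℕ → Prop)
    (hrel : ∀ j k, rel j k ↔
      (scat k ∨ (¬ scat j ∧ ∀ T : ℝ, (T : EReal) < Tmax j → L j k T < Tmax k))) :
    (∀ j, rel j j) ∧
    (∀ j k l, rel j k → rel k l → rel j l) ∧
    (∀ j k, rel j k ∨ rel k j) ∧
    (∀ j k, ¬ rel k j ↔ (rel j k ∧ ¬ (rel j k ∧ rel k j))) := by
  -- L j j T = T
  have hself : ∀ j (T : ℝ), L j j T = (T : EReal) := by
    intro j T
    have heq : ∀ n, ((lam j n * T + t j n - t j n) / lam j n : ℝ) = T := by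
      intro n
      have h0 : lam j n ≠ 0 := (hlam j n).ne'
      field_simp
      ring
    have h1 : Tendsto (fun n => (((lam j n * T + t j n - t j n) / lam j n : ℝ) : EReal))
        atTop (nhds (T : EReal)) := by
      simp only [heq]; exact tendsto_const_nhds
    exact tendsto_nhds_unique (hL j j T) h1
  -- key incompatibility used for totality
  have key : ∀ j k, (∃ T1 : ℝ, (T1 : EReal) < Tmax j ∧ Tmax k ≤ L j k T1) →
      (∃ T2 : ℝ, (T2 : EReal) < Tmax k ∧ Tmax j ≤ L k j T2) → False := by
    rintro j k ⟨T1, hT1, hLk⟩ ⟨T2, hT2, hLj⟩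
    have hlt : (T2 : EReal) < L j k T1 := lt_of_lt_of_le hT2 hLk
    have hev : ∀ᶠ n in atTop, T2 < (lam j n * T1 + t j n - t k n) / lam k n := by
      filter_upwards [(hL j k T1).eventually_const_lt hlt] with n hn
      exact_mod_cast hn
    have hev2 : ∀ᶠ n in atTop,
        (((lam k n * T2 + t k n - t j n) / lam j n : ℝ) : EReal) ≤ (T1 : EReal) := by
      filter_upwards [hev] with n hn
      have h2 : T2 * lam k n < lam j n * T1 + t j n - t k n :=
        (lt_div_iff₀ (hlam k n)).mp hn
      have h1 : (lam k n * T2 + t k n - t j n) / lam j n ≤ T1 := by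
        rw [div_le_iff₀ (hlam j n)]
        nlinarith
      exact_mod_cast h1
    have hle : L k j T2 ≤ (T1 : EReal) := le_of_tendsto (hL k j T2) hev2
    exact absurd (lt_of_lt_of_le hT1 (hLj.trans hle)) (lt_irrefl _)
  -- comparison used for transitivity
  have comp : ∀ j k l (T T' : ℝ), L j k T < (T' : EReal) → L j l T ≤ L k l T' := by
    intro j k l T T' hlt
    have hev : ∀ᶠ n in atTop, (lam j n * T + t j n - t k n) / lam k n < T' := by
      filter_upwards [(hL j k T).eventually_lt_const hlt] with n hn
      exact_mod_cast hn
    have hev2 : ∀ᶠ n in atTop,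
        (((lam j n * T + t j n - t l n) / lam l n : ℝ) : EReal) ≤
        (((lam k n * T' + t k n - t l n) / lam l n : ℝ) : EReal) := by
      filter_upwards [hev] with n hn
      have h2 : lam j n * T + t j n - t k n < T' * lam k n :=
        (div_lt_iff₀ (hlam k n)).mp hn
      have h1 : (lam j n * T + t j n - t l n) / lam l n ≤
          (lam k n * T' + t k n - t l n) / lam l n := by
        rw [div_le_div_iff₀ (hlam l n) (hlam l n)]
        nlinarith [hlam l n]
      exact_mod_cast h1
    exact le_of_tendsto_of_tendsto (hL j l T) (hL k l T') hev2
  have hreflx : ∀ j, rel j j := by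
    intro j
    rw [hrel]
    by_cases hs : scat j
    · exact Or.inl hs
    · refine Or.inr ⟨hs, fun T hT => ?_⟩
      rw [hself]; exact hT
  have htotal : ∀ j k, rel j k ∨ rel k j := by
    intro j k
    by_cases hsk : scat k
    · exact Or.inl ((hrel j k).mpr (Or.inl hsk))
    by_cases hsj : scat j
    · exact Or.inr ((hrel k j).mpr (Or.inl hsj))
    by_cases h1 : ∀ T : ℝ, (T : EReal) < Tmax j → L j k T < Tmax k
    · exact Or.inl ((hrel j k).mpr (Or.inr ⟨hsj, h1⟩))
    · refine Or.inr ((hrel k j).mpr (Or.inr ⟨hsk, fun T2 hT2 => ?_⟩))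
      by_contra hc
      push_neg at h1 hc
      obtain ⟨T1, hT1, hT1'⟩ := h1
      exact key j k ⟨T1, hT1, hT1'⟩ ⟨T2, hT2, hc⟩
  refine ⟨hreflx, ?_, htotal, ?_⟩
  · intro j k l hjk hkl
    rw [hrel] at hjk hkl ⊢
    by_cases hsl : scat l
    · exact Or.inl hsl
    rcases hkl with hkl | ⟨hsk, hkl⟩
    · exact absurd hkl hsl
    rcases hjk with hjk | ⟨hsj, hjk⟩
    · exact absurd hjk hsk
    refine Or.inr ⟨hsj, fun T hT => ?_⟩
    have h1 : L j k T < Tmax k := hjk T hT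
    obtain ⟨q, hq1, hq2⟩ := EReal.exists_rat_btwn_of_lt h1
    exact lt_of_le_of_lt (comp j k l T q hq1) (hkl q hq2)
  · intro j k
    constructor
    · intro h
      have hjk := (htotal j k).resolve_right h
      exact ⟨hjk, fun hc => h hc.2⟩
    · rintro ⟨hjk, hn⟩ hkj
      exact hn ⟨hjk, hkj⟩
end

section
/- Let {λ_n}_{n∈ℕ}, {μ_n}_{n∈ℕ} ⊂ (0,∞), {t_n}_{n∈ℕ} ⊂ ℝ, and let T_j, T_k ∈ (0, +∞]. Then it is impossible that the following three conditions hold simultaneously: (i) t_n/μ_n → +∞ as n → ∞; (ii) for every real T < T_k, limsup_{n→∞} (μ_n T + t_n)/λ_n < T_j (strict inequality of extended reals; in particular when T_j = +∞ this means the sequence is bounded above); (iii) for every real T < T_j, limsup_{n→∞} (λ_n T − t_n)/μ_n < T_k. -/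
open Filter Topology

/-- Claim A.3, first part: if `t_n/μ_n → +∞`, then the two limsup conditions expressing the
equivalence `(j) ≃ (k)` of two profiles cannot both hold. -/
theorem no_equivalence_with_divergent_translation
    (lam mu t : ℕ → ℝ)
    (hlam : ∀ n, 0 < lam n) (hmu : ∀ n, 0 < mu n)
    (Tj Tk : EReal) (hTj : 0 < Tj) (hTk : 0 < Tk)
    (h1 : Tendsto (fun n => t n / mu n) atTop atTop)
    (h2 : ∀ T : ℝ, (T : EReal) < Tk →
      limsup (fun n => (((mu n * T + t n) / lam n : ℝ) : EReal)) atTop < Tj)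
    (h3 : ∀ T : ℝ, (T : EReal) < Tj →
      limsup (fun n => (((lam n * T - t n) / mu n : ℝ) : EReal)) atTop < Tk) :
    False := by
  -- eventually t n > 0
  have htpos : ∀ᶠ n in atTop, 0 < t n := by
    filter_upwards [h1.eventually_ge_atTop 1] with n hn
    have := (le_div_iff₀ (hmu n)).mp hn
    nlinarith [hmu n]
  -- apply h2 at T = 0
  have h20 := h2 0 (by exact_mod_cast hTk)
  have h2' : limsup (fun n => ((t n / lam n : ℝ) : EReal)) atTop < Tj := by
    simpa using h20
  have hge0 : (0 : EReal) ≤ limsup (fun n => ((t n / lam n : ℝ) : EReal)) atTop := by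
    apply le_limsup_of_frequently_le'
    apply Eventually.frequently
    filter_upwards [htpos] with n hn
    exact_mod_cast (div_pos hn (hlam n)).le
  obtain ⟨a, ha1, ha2⟩ := EReal.exists_between_coe_real h2'
  obtain ⟨b, hb1, hb2⟩ := EReal.exists_between_coe_real ha1
  have hb0 : (0 : ℝ) < b := by exact_mod_cast lt_of_le_of_lt hge0 hb1
  have hba : b < a := by exact_mod_cast hb2
  -- eventually t n / lam n ≤ b
  have hev : ∀ᶠ n in atTop, t n / lam n ≤ b := by
    filter_upwards [eventually_lt_of_limsup_lt hb1] with n hn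
    exact_mod_cast hn.le
  -- the real sequence tends to atTop
  have hcm : Tendsto (fun n => (a / b - 1) * (t n / mu n)) atTop atTop :=
    h1.const_mul_atTop (by rw [sub_pos, lt_div_iff₀ hb0, one_mul]; exact hba)
  have hg : Tendsto (fun n => (lam n * a - t n) / mu n) atTop atTop := by
    refine tendsto_atTop_mono' _ ?_ hcm
    filter_upwards [htpos, hev] with n h1n h2n
    have ha0 : 0 < a := lt_trans hb0 hba
    have hl : t n / b ≤ lam n := by
      rw [div_le_iff₀ hb0]
      rw [div_le_iff₀ (hlam n)] at h2n
      nlinarith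
    have key : (a / b - 1) * t n ≤ lam n * a - t n := by
      have h4 : a * (t n / b) ≤ a * lam n := mul_le_mul_of_nonneg_left hl ha0.le
      have h5 : a / b * t n = a * (t n / b) := by ring
      nlinarith
    calc (a / b - 1) * (t n / mu n) = ((a / b - 1) * t n) / mu n := by ring
      _ ≤ (lam n * a - t n) / mu n := by gcongr; exact (hmu n).le
  -- hence the EReal limsup is ⊤
  have htop : Tendsto (fun n => (((lam n * a - t n) / mu n : ℝ) : EReal)) atTop (𝓝 ⊤) := by
    rw [EReal.tendsto_nhds_top_iff_real]
    intro x
    filter_upwards [hg.eventually_gt_atTop x] with n hn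
    exact_mod_cast hn
  have := h3 a (by exact_mod_cast ha2)
  rw [htop.limsup_eq] at this
  exact (not_top_lt this)
end

section
/- Let {λ_n}_{n∈ℕ}, {μ_n}_{n∈ℕ} ⊂ (0,∞) and T_j, T_k ∈ (0, +∞]. Assume: (i) for every real T < T_k, limsup_{n→∞} (μ_n T)/λ_n < T_j (strict inequality of extended reals; when T_j = +∞ this means the sequence is bounded above); (ii) for every real T < T_j, limsup_{n→∞} (λ_n T)/μ_n < T_k. Then 0 < liminf_{n→∞} λ_n/μ_n ≤ limsup_{n→∞} λ_n/μ_n < +∞; moreover T_j = +∞ if and only if T_k = +∞, and if T_j < +∞ then T_k < +∞ and λ_n/μ_n → T_k/T_j as n → ∞. -/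
open Filter Topology

/-- Claim A.3, second part: if two profiles with vanishing time translations are equivalent for
the preorder `≼`, then the ratio of their scaling parameters stays bounded above and below, the
maximal forward existence times are simultaneously finite or infinite, and in the finite case
the ratio converges to `T_k / T_j`. -/
theorem equivalence_scaling_ratio
    (lam mu : ℕ → ℝ) (hlam : ∀ n, 0 < lam n) (hmu : ∀ n, 0 < mu n)
    (Tj Tk : EReal) (hTj : 0 < Tj) (hTk : 0 < Tk)
    (h1 : ∀ T : ℝ, (T : EReal) < Tk →
      limsup (fun n => ((mu n * T / lam n : ℝ) : EReal)) atTop < Tj)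
    (h2 : ∀ T : ℝ, (T : EReal) < Tj →
      limsup (fun n => ((lam n * T / mu n : ℝ) : EReal)) atTop < Tk) :
    0 < liminf (fun n => ((lam n / mu n : ℝ) : EReal)) atTop ∧
    liminf (fun n => ((lam n / mu n : ℝ) : EReal)) atTop ≤
      limsup (fun n => ((lam n / mu n : ℝ) : EReal)) atTop ∧
    limsup (fun n => ((lam n / mu n : ℝ) : EReal)) atTop < ⊤ ∧
    (Tj = ⊤ ↔ Tk = ⊤) ∧
    (Tj < ⊤ → Tk < ⊤ ∧
      Tendsto (fun n => lam n / mu n) atTop (nhds (Tk.toReal / Tj.toReal))) := by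
  -- Step 1: a positive lower bound c for lam n / mu n
  obtain ⟨T0, hT0pos', hT0lt⟩ := EReal.exists_between_coe_real hTk
  have hT0pos : (0:ℝ) < T0 := by exact_mod_cast hT0pos'
  have hls1 : limsup (fun n => ((mu n * T0 / lam n : ℝ) : EReal)) atTop < ⊤ :=
    lt_of_lt_of_le (h1 T0 hT0lt) le_top
  obtain ⟨M, hM1, -⟩ := EReal.exists_between_coe_real hls1
  have hev1 : ∀ᶠ n in atTop, mu n * T0 / lam n < M := by
    filter_upwards [eventually_lt_of_limsup_lt hM1] with n hn
    exact_mod_cast hn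
  have hMpos : (0:ℝ) < M := by
    obtain ⟨n, hn⟩ := hev1.exists
    have : 0 < mu n * T0 / lam n := div_pos (mul_pos (hmu n) hT0pos) (hlam n)
    linarith
  set c := T0 / M with hc
  have hcpos : (0:ℝ) < c := div_pos hT0pos hMpos
  have evc : ∀ᶠ n in atTop, c < lam n / mu n := by
    filter_upwards [hev1] with n hn
    rw [hc, div_lt_div_iff₀ hMpos (hmu n)]
    rw [div_lt_iff₀ (hlam n)] at hn
    nlinarith [hmu n, hlam n]
  -- Step 2: an upper bound C for lam n / mu n
  obtain ⟨T1, hT1pos', hT1lt⟩ := EReal.exists_between_coe_real hTj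
  have hT1pos : (0:ℝ) < T1 := by exact_mod_cast hT1pos'
  have hls2 : limsup (fun n => ((lam n * T1 / mu n : ℝ) : EReal)) atTop < ⊤ :=
    lt_of_lt_of_le (h2 T1 hT1lt) le_top
  obtain ⟨M', hM2, -⟩ := EReal.exists_between_coe_real hls2
  have hev2 : ∀ᶠ n in atTop, lam n * T1 / mu n < M' := by
    filter_upwards [eventually_lt_of_limsup_lt hM2] with n hn
    exact_mod_cast hn
  have hM'pos : (0:ℝ) < M' := by
    obtain ⟨n, hn⟩ := hev2.exists
    have : 0 < lam n * T1 / mu n := div_pos (mul_pos (hlam n) hT1pos) (hmu n)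
    linarith
  set C := M' / T1 with hC
  have hCpos : (0:ℝ) < C := div_pos hM'pos hT1pos
  have evC : ∀ᶠ n in atTop, lam n / mu n < C := by
    filter_upwards [hev2] with n hn
    rw [hC, div_lt_div_iff₀ (hmu n) hT1pos]
    rw [div_lt_iff₀ (hmu n)] at hn
    nlinarith
  -- liminf/limsup conclusions
  have hlif : (c : EReal) ≤ liminf (fun n => ((lam n / mu n : ℝ) : EReal)) atTop := by
    refine le_liminf_of_le (by isBoundedDefault) ?_
    filter_upwards [evc] with n hn
    exact_mod_cast hn.le
  have hlsf : limsup (fun n => ((lam n / mu n : ℝ) : EReal)) atTop ≤ (C : EReal) := by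
    refine limsup_le_of_le (by isBoundedDefault) ?_
    filter_upwards [evC] with n hn
    exact_mod_cast hn.le
  -- the iff, both directions
  have himp1 : Tj = ⊤ → Tk = ⊤ := by
    intro hj
    by_contra hk
    have hkbot : Tk ≠ ⊥ := (lt_trans (by norm_num) hTk).ne'
    obtain ⟨tk, htk⟩ : ∃ tk : ℝ, Tk = (tk : EReal) := ⟨Tk.toReal, (EReal.coe_toReal hk hkbot).symm⟩
    have htkpos : 0 < tk := by rw [htk] at hTk; exact_mod_cast hTk
    have hTpos : 0 < tk / c + 1 := by positivity
    have hlt : ((tk / c + 1 : ℝ) : EReal) < Tj := hj ▸ EReal.coe_lt_top _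
    have hls := h2 _ hlt
    rw [htk] at hls
    have hev : ∀ᶠ n in atTop, lam n * (tk / c + 1) / mu n < tk := by
      filter_upwards [eventually_lt_of_limsup_lt hls] with n hn
      exact_mod_cast hn
    obtain ⟨n, hn1, hn2⟩ := (hev.and evc).exists
    rw [div_lt_iff₀ (hmu n)] at hn1
    have h3 : c * mu n < lam n := (lt_div_iff₀ (hmu n)).mp hn2
    have hcT : c * (tk / c + 1) = tk + c := by field_simp
    have h5 : (tk + c) * mu n < tk * mu n := by
      calc (tk + c) * mu n = (c * mu n) * (tk / c + 1) := by rw [← hcT]; ring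
        _ < lam n * (tk / c + 1) := mul_lt_mul_of_pos_right h3 hTpos
        _ < tk * mu n := hn1
    nlinarith [mul_pos hcpos (hmu n)]
  have himp2 : Tk = ⊤ → Tj = ⊤ := by
    intro hk
    by_contra hj
    have hjbot : Tj ≠ ⊥ := (lt_trans (by norm_num) hTj).ne'
    obtain ⟨tj, htj⟩ : ∃ tj : ℝ, Tj = (tj : EReal) := ⟨Tj.toReal, (EReal.coe_toReal hj hjbot).symm⟩
    have htjpos : 0 < tj := by rw [htj] at hTj; exact_mod_cast hTj
    have hlt : ((tj * C + 1 : ℝ) : EReal) < Tk := hk ▸ EReal.coe_lt_top _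
    have hls := h1 _ hlt
    rw [htj] at hls
    have hev : ∀ᶠ n in atTop, mu n * (tj * C + 1) / lam n < tj := by
      filter_upwards [eventually_lt_of_limsup_lt hls] with n hn
      exact_mod_cast hn
    obtain ⟨n, hn1, hn2⟩ := (hev.and evC).exists
    rw [div_lt_iff₀ (hlam n)] at hn1
    have h3 : tj * lam n < tj * (C * mu n) :=
      mul_lt_mul_of_pos_left ((div_lt_iff₀ (hmu n)).mp hn2) htjpos
    nlinarith [hmu n]
  refine ⟨lt_of_lt_of_le (by exact_mod_cast hcpos) hlif, liminf_le_limsup,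
    lt_of_le_of_lt hlsf (EReal.coe_lt_top C), ⟨himp1, himp2⟩, ?_⟩
  -- the finite case
  intro hjlt
  have hj : Tj ≠ ⊤ := hjlt.ne
  have hjbot : Tj ≠ ⊥ := (lt_trans (by norm_num) hTj).ne'
  obtain ⟨tj, htj⟩ : ∃ tj : ℝ, Tj = (tj : EReal) := ⟨Tj.toReal, (EReal.coe_toReal hj hjbot).symm⟩
  have htjpos : 0 < tj := by rw [htj] at hTj; exact_mod_cast hTj
  have hk : Tk ≠ ⊤ := fun h => hj (himp2 h)
  have hkbot : Tk ≠ ⊥ := (lt_trans (by norm_num) hTk).ne'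
  obtain ⟨tk, htk⟩ : ∃ tk : ℝ, Tk = (tk : EReal) := ⟨Tk.toReal, (EReal.coe_toReal hk hkbot).symm⟩
  have htkpos : 0 < tk := by rw [htk] at hTk; exact_mod_cast hTk
  refine ⟨lt_top_iff_ne_top.mpr hk, ?_⟩
  rw [htj, htk]
  simp only [EReal.toReal_coe]
  rw [Metric.tendsto_nhds]
  intro ε hε
  -- upper bound
  have hDpos : 0 < tk + ε * tj := by positivity
  set T := tj * tk / (tk + ε * tj) with hTdef
  have hTpos : 0 < T := by positivity
  have hTlt : T < tj := by
    rw [hTdef, div_lt_iff₀ hDpos]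
    nlinarith [mul_pos htjpos (mul_pos hε htjpos)]
  have hltj : (T : EReal) < Tj := by rw [htj]; exact_mod_cast hTlt
  have hup := h2 T hltj
  rw [htk] at hup
  have hevU : ∀ᶠ n in atTop, lam n * T / mu n < tk := by
    filter_upwards [eventually_lt_of_limsup_lt hup] with n hn
    exact_mod_cast hn
  -- lower bound
  set S := tk - ε * tj / 2 with hSdef
  have hSlt0 : S < tk := by
    rw [hSdef]; nlinarith [mul_pos hε htjpos]
  have hSlt : (S : EReal) < Tk := by
    rw [htk]; exact_mod_cast hSlt0
  have hlow := h1 S hSlt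
  rw [htj] at hlow
  have hevL : ∀ᶠ n in atTop, mu n * S / lam n < tj := by
    filter_upwards [eventually_lt_of_limsup_lt hlow] with n hn
    exact_mod_cast hn
  filter_upwards [hevU, hevL] with n hU hL
  rw [Real.dist_eq, abs_lt]
  rw [div_lt_iff₀ (hmu n)] at hU
  rw [div_lt_iff₀ (hlam n)] at hL
  constructor
  · have h6 : S / tj < lam n / mu n := by
      rw [div_lt_div_iff₀ htjpos (hmu n)]
      nlinarith
    have hS' : tk / tj - ε < S / tj := by
      rw [hSdef, sub_div]
      have h7 : ε * tj / 2 / tj = ε / 2 := by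
        field_simp
      rw [h7]; linarith
    linarith
  · have h6 : lam n / mu n < tk / T := by
      rw [div_lt_div_iff₀ (hmu n) hTpos]
      nlinarith
    have hTk' : tk / T = tk / tj + ε := by
      rw [hTdef]
      rw [div_div_eq_mul_div]
      field_simp
    linarith
end

section
/- Let N ≥ 1 and let {(λ_{j,n}, x_{j,n}, t_{j,n})}_{n∈ℕ}, indexed by j ≥ 1, be orthogonal parameter sequences in (0,∞)×ℝ^N×ℝ. For each pair (j,k) of positive integers let μ_{j,k} > 0, y_{j,k} ∈ ℝ^N, s_{j,k} ∈ ℝ be constants, and define the composed parameters ν_{j,k,n} = λ_{j,n} μ_{j,k}, z_{j,k,n} = x_{j,n} + λ_{j,n} y_{j,k}, τ_{j,k,n} = t_{j,n} + λ_{j,n} s_{j,k}. Then for all j ≠ j' and all k, k', one has |log(ν_{j,k,n}/ν_{j',k',n})| + |τ_{j,k,n} − τ_{j',k',n}|/ν_{j,k,n} + |z_{j,k,n} − z_{j',k',n}|/ν_{j,k,n} → +∞ as n → ∞. -/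
open Filter Topology

/-- Orthogonality of a family of parameter sequences. -/
def OrthoParams {N : ℕ} {ι : Type*} (lam : ι → ℕ → ℝ)
    (x : ι → ℕ → EuclideanSpace ℝ (Fin N)) (t : ι → ℕ → ℝ) : Prop :=
  ∀ j k : ι, j ≠ k →
    Tendsto (fun n => |Real.log (lam j n / lam k n)| + |t j n - t k n| / lam j n
      + ‖x j n - x k n‖ / lam j n) atTop atTop

/-- Step 3 (equation (DPD15)) of the proof of Lemma 3.7: composing orthogonal parameter
sequences with fixed rescalings and translations preserves orthogonality across distinct
outer indices. -/
theorem composed_parameters_orthogonal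
    (N : ℕ) (hN : 1 ≤ N)
    (lam : ℕ → ℕ → ℝ) (x : ℕ → ℕ → EuclideanSpace ℝ (Fin N)) (t : ℕ → ℕ → ℝ)
    (hlam : ∀ j n, 0 < lam j n)
    (hortho : OrthoParams lam x t)
    (mu : ℕ → ℕ → ℝ) (hmu : ∀ j k, 0 < mu j k)
    (y : ℕ → ℕ → EuclideanSpace ℝ (Fin N)) (s : ℕ → ℕ → ℝ) :
    ∀ j k j' k' : ℕ, j ≠ j' →
      Tendsto (fun n =>
          |Real.log ((lam j n * mu j k) / (lam j' n * mu j' k'))|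
          + |(t j n + lam j n * s j k) - (t j' n + lam j' n * s j' k')|
              / (lam j n * mu j k)
          + ‖(x j n + lam j n • y j k) - (x j' n + lam j' n • y j' k')‖
              / (lam j n * mu j k))
        atTop atTop := by

  intro j k j' k' hjj'
  rw [tendsto_atTop]
  intro M
  have hμ0 : (0:ℝ) < mu j k := hmu j k
  have hμ'0 : (0:ℝ) < mu j' k' := hmu j' k'
  set C1 : ℝ := |Real.log (mu j k / mu j' k')| with hC1def
  set A : ℝ := |s j k| + ‖y j k‖ with hAdef
  set A' : ℝ := |s j' k'| + ‖y j' k'‖ with hA'def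
  set R : ℝ := max 1 (Real.exp (M + C1)) with hRdef
  have hR1 : (1:ℝ) ≤ R := le_max_left _ _
  have hR0 : (0:ℝ) < R := lt_of_lt_of_le one_pos hR1
  set m : ℝ := min 1 (mu j k)⁻¹ with hmdef
  have hm0 : 0 < m := lt_min one_pos (inv_pos.2 hμ0)
  have hm1 : m ≤ 1 := min_le_left _ _
  have hmμ : m ≤ (mu j k)⁻¹ := min_le_right _ _
  have hA0 : 0 ≤ A := add_nonneg (abs_nonneg _) (norm_nonneg _)
  have hA'0 : 0 ≤ A' := add_nonneg (abs_nonneg _) (norm_nonneg _)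
  have hL := (tendsto_atTop.1 (hortho j j' hjj'))
      ((M + C1 + (A + R * A') * (mu j k)⁻¹) / m)
  filter_upwards [hL] with n hn
  have ha := hlam j n
  have hb := hlam j' n
  have haμ : 0 < lam j n * mu j k := mul_pos ha hμ0
  have key : ∀ P K : ℝ, (P - lam j n * K) / (lam j n * mu j k)
      = P / lam j n * (mu j k)⁻¹ - K * (mu j k)⁻¹ := by
    intro P K
    rw [sub_div, ← div_div, mul_div_mul_left K (mu j k) ha.ne',
      div_eq_mul_inv (P / lam j n), div_eq_mul_inv K]
  set G : ℝ := |Real.log (lam j n / lam j' n)| with hGdef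
  set T : ℝ := |t j n - t j' n| / lam j n with hTdef
  set X : ℝ := ‖x j n - x j' n‖ / lam j n with hXdef
  have hG0 : 0 ≤ G := abs_nonneg _
  have hT0 : 0 ≤ T := div_nonneg (abs_nonneg _) ha.le
  have hX0 : 0 ≤ X := div_nonneg (norm_nonneg _) ha.le
  have hTd0 : 0 ≤ |(t j n + lam j n * s j k) - (t j' n + lam j' n * s j' k')|
      / (lam j n * mu j k) := div_nonneg (abs_nonneg _) haμ.le
  have hXd0 : 0 ≤ ‖(x j n + lam j n • y j k) - (x j' n + lam j' n • y j' k')‖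
      / (lam j n * mu j k) := div_nonneg (norm_nonneg _) haμ.le
  -- log identity and lower bound
  have hlogid : Real.log (lam j n * mu j k / (lam j' n * mu j' k')) =
      Real.log (lam j n / lam j' n) + Real.log (mu j k / mu j' k') := by
    rw [show lam j n * mu j k / (lam j' n * mu j' k') =
        (lam j n / lam j' n) * (mu j k / mu j' k') by field_simp]
    exact Real.log_mul (div_pos ha hb).ne' (div_pos hμ0 hμ'0).ne'
  have hlog1 : G - C1 ≤ |Real.log (lam j n * mu j k / (lam j' n * mu j' k'))| := by
    rw [hlogid]
    have h1 : |Real.log (lam j n / lam j' n)| ≤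
        |Real.log (lam j n / lam j' n) + Real.log (mu j k / mu j' k')|
        + |Real.log (mu j k / mu j' k')| := by
      have := abs_add_le (Real.log (lam j n / lam j' n) + Real.log (mu j k / mu j' k'))
          (-(Real.log (mu j k / mu j' k')))
      simpa using this
    simp only [hGdef, hC1def]
    linarith
  have hn' : M + C1 + (A + R * A') * (mu j k)⁻¹ ≤ (G + T + X) * m := by
    rw [div_le_iff₀ hm0] at hn
    linarith
  by_cases hcase : lam j' n ≤ R * lam j n
  · -- bounded ratio case
    have ht1 : |t j n - t j' n| - lam j n * (|s j k| + R * |s j' k'|) ≤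
        |(t j n + lam j n * s j k) - (t j' n + lam j' n * s j' k')| := by
      have e1 : (t j n + lam j n * s j k) - (t j' n + lam j' n * s j' k') =
          (t j n - t j' n) + (lam j n * s j k - lam j' n * s j' k') := by ring
      have h2 : |t j n - t j' n| - |lam j n * s j k - lam j' n * s j' k'| ≤
          |(t j n - t j' n) + (lam j n * s j k - lam j' n * s j' k')| := by
        have h := abs_add_le ((t j n - t j' n) + (lam j n * s j k - lam j' n * s j' k'))
            (-(lam j n * s j k - lam j' n * s j' k'))
        rw [add_neg_cancel_right, abs_neg] at h
        linarith
      have h3 : |lam j n * s j k - lam j' n * s j' k'| ≤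
          lam j n * |s j k| + lam j' n * |s j' k'| := by
        calc |lam j n * s j k - lam j' n * s j' k'|
            ≤ |lam j n * s j k| + |lam j' n * s j' k'| := abs_sub _ _
          _ = lam j n * |s j k| + lam j' n * |s j' k'| := by
              rw [abs_mul, abs_mul, abs_of_pos ha, abs_of_pos hb]
      have h4 : lam j' n * |s j' k'| ≤ R * lam j n * |s j' k'| :=
        mul_le_mul_of_nonneg_right hcase (abs_nonneg _)
      rw [e1]
      linarith
    have hT2 : (T - (|s j k| + R * |s j' k'|)) * (mu j k)⁻¹ ≤
        |(t j n + lam j n * s j k) - (t j' n + lam j' n * s j' k')|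
          / (lam j n * mu j k) := by
      calc (T - (|s j k| + R * |s j' k'|)) * (mu j k)⁻¹
          = (|t j n - t j' n| - lam j n * (|s j k| + R * |s j' k'|))
            / (lam j n * mu j k) := by
            rw [hTdef, key]
            ring
        _ ≤ _ := (div_le_div_iff_of_pos_right haμ).2 ht1
    have hx1 : ‖x j n - x j' n‖ - lam j n * (‖y j k‖ + R * ‖y j' k'‖) ≤
        ‖(x j n + lam j n • y j k) - (x j' n + lam j' n • y j' k')‖ := by
      have e2 : (x j n + lam j n • y j k) - (x j' n + lam j' n • y j' k') =
          (x j n - x j' n) + (lam j n • y j k - lam j' n • y j' k') := by abel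
      have h2 : ‖x j n - x j' n‖ - ‖lam j n • y j k - lam j' n • y j' k'‖ ≤
          ‖(x j n - x j' n) + (lam j n • y j k - lam j' n • y j' k')‖ := by
        have h := norm_add_le ((x j n - x j' n) + (lam j n • y j k - lam j' n • y j' k'))
            (-(lam j n • y j k - lam j' n • y j' k'))
        rw [add_neg_cancel_right, norm_neg] at h
        linarith
      have h3 : ‖lam j n • y j k - lam j' n • y j' k'‖ ≤
          lam j n * ‖y j k‖ + lam j' n * ‖y j' k'‖ := by
        calc ‖lam j n • y j k - lam j' n • y j' k'‖
            ≤ ‖lam j n • y j k‖ + ‖lam j' n • y j' k'‖ := norm_sub_le _ _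
          _ = lam j n * ‖y j k‖ + lam j' n * ‖y j' k'‖ := by
              rw [norm_smul, norm_smul, Real.norm_eq_abs, Real.norm_eq_abs,
                abs_of_pos ha, abs_of_pos hb]
      have h4 : lam j' n * ‖y j' k'‖ ≤ R * lam j n * ‖y j' k'‖ :=
        mul_le_mul_of_nonneg_right hcase (norm_nonneg _)
      rw [e2]
      linarith
    have hX2 : (X - (‖y j k‖ + R * ‖y j' k'‖)) * (mu j k)⁻¹ ≤
        ‖(x j n + lam j n • y j k) - (x j' n + lam j' n • y j' k')‖
          / (lam j n * mu j k) := by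
      calc (X - (‖y j k‖ + R * ‖y j' k'‖)) * (mu j k)⁻¹
          = (‖x j n - x j' n‖ - lam j n * (‖y j k‖ + R * ‖y j' k'‖))
            / (lam j n * mu j k) := by
            rw [hXdef, key]
            ring
        _ ≤ _ := (div_le_div_iff_of_pos_right haμ).2 hx1
    have hGm : m * G ≤ G := mul_le_of_le_one_left hG0 hm1
    have hTm : m * T ≤ T * (mu j k)⁻¹ := by
      have := mul_le_mul_of_nonneg_right hmμ hT0
      linarith [this]
    have hXm : m * X ≤ X * (mu j k)⁻¹ := by
      have := mul_le_mul_of_nonneg_right hmμ hX0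
      linarith [this]
    have hexp : (|s j k| + R * |s j' k'|) * (mu j k)⁻¹
        + (‖y j k‖ + R * ‖y j' k'‖) * (mu j k)⁻¹ = (A + R * A') * (mu j k)⁻¹ := by
      rw [hAdef, hA'def]; ring
    linarith [hlog1, hT2, hX2, hn', hGm, hTm, hXm, hexp]
  · -- large ratio case
    push_neg at hcase
    have hRlog : M + C1 ≤ Real.log R := by
      calc M + C1 = Real.log (Real.exp (M + C1)) := (Real.log_exp _).symm
        _ ≤ Real.log R := Real.log_le_log (Real.exp_pos _) (le_max_right _ _)
    have hdiv : R < lam j' n / lam j n := (lt_div_iff₀ ha).2 hcase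
    have hlt : Real.log R < Real.log (lam j' n / lam j n) :=
      Real.log_lt_log hR0 hdiv
    have hGge : Real.log (lam j' n / lam j n) ≤ G := by
      rw [hGdef, Real.log_div ha.ne' hb.ne', show Real.log (lam j' n / lam j n)
        = Real.log (lam j' n) - Real.log (lam j n) from Real.log_div hb.ne' ha.ne']
      rw [abs_sub_comm]
      exact le_abs_self _
    linarith
end

section
/- Let N ≥ 1 and let {(λ_{j,n}, x_{j,n}, t_{j,n})}_{n∈ℕ}, indexed by j ≥ 1, be orthogonal parameter sequences in (0,∞)×ℝ^N×ℝ. Suppose that for each j there are sequences (λ̃_{j,n}, x̃_{j,n}, t̃_{j,n}) ∈ (0,∞)×ℝ^N×ℝ and constants (μ_j, y_j, s_j) ∈ (0,∞)×ℝ^N×ℝ such that λ̃_{j,n}/λ_{j,n} → μ_j, (x̃_{j,n} − x_{j,n})/λ_{j,n} → y_j, and (t̃_{j,n} − t_{j,n})/λ_{j,n} → s_j as n → ∞. Then the family {(λ̃_{j,n}, x̃_{j,n}, t̃_{j,n})}_{n∈ℕ}, j ≥ 1, is also orthogonal. -/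
open Filter Topology

/-- First step of the proof of Lemma 3.2: orthogonality of parameters is preserved under
perturbations of the parameters which converge after renormalization by the scales. -/
theorem perturbed_parameters_orthogonal
    (N : ℕ) (hN : 1 ≤ N)
    (lam : ℕ → ℕ → ℝ) (x : ℕ → ℕ → EuclideanSpace ℝ (Fin N)) (t : ℕ → ℕ → ℝ)
    (hlam : ∀ j n, 0 < lam j n)
    (hortho : OrthoParams lam x t)
    (lam' : ℕ → ℕ → ℝ) (x' : ℕ → ℕ → EuclideanSpace ℝ (Fin N)) (t' : ℕ → ℕ → ℝ)
    (hlam' : ∀ j n, 0 < lam' j n)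
    (mu : ℕ → ℝ) (y : ℕ → EuclideanSpace ℝ (Fin N)) (s : ℕ → ℝ)
    (hmu : ∀ j, 0 < mu j)
    (h1 : ∀ j, Tendsto (fun n => lam' j n / lam j n) atTop (nhds (mu j)))
    (h2 : ∀ j, Tendsto (fun n => (lam j n)⁻¹ • (x' j n - x j n)) atTop (nhds (y j)))
    (h3 : ∀ j, Tendsto (fun n => (t' j n - t j n) / lam j n) atTop (nhds (s j))) :
    OrthoParams lam' x' t' := by
  intro j k hjk
  rw [tendsto_atTop]
  intro C
  -- constants
  set Sj : ℝ := |s j| + 1 with hSj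
  set Sk : ℝ := |s k| + 1 with hSk
  set Yj : ℝ := ‖y j‖ + 1 with hYj
  set Yk : ℝ := ‖y k‖ + 1 with hYk
  set Mj : ℝ := |Real.log (mu j)| + 1 with hMj
  set Mk : ℝ := |Real.log (mu k)| + 1 with hMk
  set M : ℝ := Mj + Mk with hM
  set C' : ℝ := |C| + 1 with hCdef
  have hC'0 : (0:ℝ) < C' := by positivity
  have hCC' : C ≤ C' := le_trans (le_abs_self C) (by simp [hCdef])
  set K : ℝ := Real.exp (C' + M) with hK
  have hK0 : 0 < K := Real.exp_pos _
  have hSj0 : (0:ℝ) < Sj := by positivity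
  have hSk0 : (0:ℝ) < Sk := by positivity
  have hYj0 : (0:ℝ) < Yj := by positivity
  have hYk0 : (0:ℝ) < Yk := by positivity
  set E : ℝ := Sj + K * Sk + Yj + K * Yk with hE
  have hE0 : 0 < E := by positivity
  have hmuj := hmu j
  have hmuk := hmu k
  set D : ℝ := (C' + M) + (mu j + 1) * (C' + (2 / mu j) * E) with hD
  -- eventual bounds
  have elogj : ∀ᶠ n in atTop, |Real.log (lam' j n / lam j n)| ≤ Mj := by
    have h : Tendsto (fun n => |Real.log (lam' j n / lam j n)|) atTop
        (nhds |Real.log (mu j)|) :=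
      ((Real.continuousAt_log (ne_of_gt hmuj)).tendsto.comp (h1 j)).abs
    exact h.eventually_le_const (by simp [hMj])
  have elogk : ∀ᶠ n in atTop, |Real.log (lam' k n / lam k n)| ≤ Mk := by
    have h : Tendsto (fun n => |Real.log (lam' k n / lam k n)|) atTop
        (nhds |Real.log (mu k)|) :=
      ((Real.continuousAt_log (ne_of_gt hmuk)).tendsto.comp (h1 k)).abs
    exact h.eventually_le_const (by simp [hMk])
  have elo : ∀ᶠ n in atTop, mu j / 2 ≤ lam' j n / lam j n :=
    (h1 j).eventually_const_le (by linarith)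
  have ehi : ∀ᶠ n in atTop, lam' j n / lam j n ≤ mu j + 1 :=
    (h1 j).eventually_le_const (by linarith)
  have ea : ∀ᶠ n in atTop, |(t' j n - t j n) / lam j n| ≤ Sj :=
    (h3 j).abs.eventually_le_const (by simp [hSj])
  have eb : ∀ᶠ n in atTop, |(t' k n - t k n) / lam k n| ≤ Sk :=
    (h3 k).abs.eventually_le_const (by simp [hSk])
  have eu : ∀ᶠ n in atTop, ‖(lam j n)⁻¹ • (x' j n - x j n)‖ ≤ Yj :=
    (h2 j).norm.eventually_le_const (by simp [hYj])
  have ev : ∀ᶠ n in atTop, ‖(lam k n)⁻¹ • (x' k n - x k n)‖ ≤ Yk :=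
    (h2 k).norm.eventually_le_const (by simp [hYk])
  have eF : ∀ᶠ n in atTop, D ≤ |Real.log (lam j n / lam k n)| + |t j n - t k n| / lam j n
      + ‖x j n - x k n‖ / lam j n := (tendsto_atTop.mp (hortho j k hjk)) D
  rw [eventually_atTop]
  rw [eventually_atTop] at elogj elogk elo ehi ea eb eu ev eF
  obtain ⟨n1, H1⟩ := elogj
  obtain ⟨n2, H2⟩ := elogk
  obtain ⟨n3, H3⟩ := elo
  obtain ⟨n4, H4⟩ := ehi
  obtain ⟨n5, H5⟩ := ea
  obtain ⟨n6, H6⟩ := eb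
  obtain ⟨n7, H7⟩ := eu
  obtain ⟨n8, H8⟩ := ev
  obtain ⟨n9, H9⟩ := eF
  clear_value Sj Sk Yj Yk Mj Mk M C' K E D
  refine ⟨n1 ⊔ n2 ⊔ n3 ⊔ n4 ⊔ n5 ⊔ n6 ⊔ n7 ⊔ n8 ⊔ n9, fun n hn => ?_⟩
  simp only [sup_le_iff] at hn
  obtain ⟨⟨⟨⟨⟨⟨⟨⟨hn1, hn2⟩, hn3⟩, hn4⟩, hn5⟩, hn6⟩, hn7⟩, hn8⟩, hn9⟩ := hn
  have hF := H9 n hn9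
  have Lj0 := hlam j n; have Lk0 := hlam k n
  have L'j0 := hlam' j n; have L'k0 := hlam' k n
  set Lj := lam j n with hLj; set Lk := lam k n with hLk
  set L'j := lam' j n with hL'j; set L'k := lam' k n with hL'k
  set A : ℝ := |Real.log (Lj / Lk)| with hA
  set B : ℝ := |t j n - t k n| / Lj with hB
  set Cn : ℝ := ‖x j n - x k n‖ / Lj with hCn
  set A' : ℝ := |Real.log (L'j / L'k)| with hA'
  set B' : ℝ := |t' j n - t' k n| / L'j with hB'
  set Cn' : ℝ := ‖x' j n - x' k n‖ / L'j with hCn'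
  have hB'0 : 0 ≤ B' := by positivity
  have hCn'0 : 0 ≤ Cn' := by positivity
  have hA'0 : 0 ≤ A' := abs_nonneg _
  -- log decomposition
  have hlogdec : Real.log (L'j / L'k)
      = Real.log (Lj / Lk) + Real.log (L'j / Lj) - Real.log (L'k / Lk) := by
    rw [Real.log_div (ne_of_gt L'j0) (ne_of_gt L'k0),
      Real.log_div (ne_of_gt Lj0) (ne_of_gt Lk0),
      Real.log_div (ne_of_gt L'j0) (ne_of_gt Lj0),
      Real.log_div (ne_of_gt L'k0) (ne_of_gt Lk0)]
    ring
  have hA'ge : A - M ≤ A' := by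
    have t1 := H1 n hn1
    have t2 := H2 n hn2
    have h := abs_sub_abs_le_abs_sub (Real.log (Lj / Lk))
      (Real.log (Lj / Lk) - Real.log (L'j / L'k))
    have habs : |Real.log (Lj / Lk) - Real.log (L'j / L'k)|
        ≤ |Real.log (L'j / Lj)| + |Real.log (L'k / Lk)| := by
      rw [hlogdec]
      have heq : Real.log (Lj / Lk)
          - (Real.log (Lj / Lk) + Real.log (L'j / Lj) - Real.log (L'k / Lk))
          = Real.log (L'k / Lk) - Real.log (L'j / Lj) := by ring
      rw [heq]
      calc |Real.log (L'k / Lk) - Real.log (L'j / Lj)|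
          ≤ |Real.log (L'k / Lk)| + |Real.log (L'j / Lj)| := abs_sub _ _
        _ = |Real.log (L'j / Lj)| + |Real.log (L'k / Lk)| := by ring
    simp only [sub_sub_cancel] at h
    simp only [hM]
    linarith
  by_cases hcase : C' + M ≤ A
  · have : C' ≤ A' := by linarith
    linarith
  · push_neg at hcase
    -- bound lam k n ≤ K * lam j n
    have hKK : Lk ≤ K * Lj := by
      have h1' : Real.log (Lk / Lj) ≤ C' + M := by
        have heq : Real.log (Lk / Lj) = - Real.log (Lj / Lk) := by
          rw [Real.log_div (ne_of_gt Lk0) (ne_of_gt Lj0),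
            Real.log_div (ne_of_gt Lj0) (ne_of_gt Lk0)]; ring
        rw [heq]
        have := neg_abs_le (Real.log (Lj / Lk))
        have hAd : |Real.log (Lj / Lk)| = A := rfl
        linarith [this]
      have h2' : Lk / Lj ≤ K := by
        calc Lk / Lj = Real.exp (Real.log (Lk / Lj)) :=
              (Real.exp_log (div_pos Lk0 Lj0)).symm
          _ ≤ K := by rw [hK]; exact Real.exp_le_exp.mpr h1'
      exact (div_le_iff₀ Lj0).mp h2'
    -- scale comparisons
    have hlo : mu j / 2 * Lj ≤ L'j := (le_div_iff₀ Lj0).mp (H3 n hn3)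
    have hhi : L'j ≤ (mu j + 1) * Lj := (div_le_iff₀ Lj0).mp (H4 n hn4)
    -- perturbation bounds
    have hta : |t' j n - t j n| ≤ Sj * Lj := by
      have h := H5 n hn5
      rw [abs_div, abs_of_pos Lj0, div_le_iff₀ Lj0] at h
      linarith
    have htb : |t' k n - t k n| ≤ Sk * K * Lj := by
      have h := H6 n hn6
      rw [abs_div, abs_of_pos Lk0, div_le_iff₀ Lk0] at h
      calc |t' k n - t k n| ≤ Sk * Lk := h
        _ ≤ Sk * (K * Lj) := mul_le_mul_of_nonneg_left hKK (le_of_lt hSk0)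
        _ = Sk * K * Lj := by ring
    have hxa : ‖x' j n - x j n‖ ≤ Yj * Lj := by
      have h := H7 n hn7
      rw [norm_smul, Real.norm_eq_abs, abs_inv, abs_of_pos Lj0, inv_mul_le_iff₀ Lj0] at h
      linarith
    have hxb : ‖x' k n - x k n‖ ≤ Yk * K * Lj := by
      have h := H8 n hn8
      rw [norm_smul, Real.norm_eq_abs, abs_inv, abs_of_pos Lk0, inv_mul_le_iff₀ Lk0] at h
      calc ‖x' k n - x k n‖ ≤ Lk * Yk := h
        _ ≤ K * Lj * Yk := mul_le_mul_of_nonneg_right hKK (le_of_lt hYk0)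
        _ = Yk * K * Lj := by ring
    -- triangle inequalities
    have htri : |t j n - t k n| - Sj * Lj - Sk * K * Lj ≤ |t' j n - t' k n| := by
      have h := abs_sub_abs_le_abs_sub (t j n - t k n)
        (t j n - t k n - (t' j n - t' k n))
      have h2 : |t j n - t k n - (t' j n - t' k n)|
          ≤ |t' j n - t j n| + |t' k n - t k n| := by
        have heq : t j n - t k n - (t' j n - t' k n)
            = (t' k n - t k n) - (t' j n - t j n) := by ring
        rw [heq]
        calc |(t' k n - t k n) - (t' j n - t j n)|
            ≤ |t' k n - t k n| + |t' j n - t j n| := abs_sub _ _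
          _ = |t' j n - t j n| + |t' k n - t k n| := by ring
      simp only [sub_sub_cancel] at h
      linarith
    have hxtri : ‖x j n - x k n‖ - Yj * Lj - Yk * K * Lj ≤ ‖x' j n - x' k n‖ := by
      have h := norm_sub_norm_le (x j n - x k n) (x j n - x k n - (x' j n - x' k n))
      have heq : x j n - x k n - (x j n - x k n - (x' j n - x' k n))
          = x' j n - x' k n := by abel
      rw [heq] at h
      have h2 : ‖x j n - x k n - (x' j n - x' k n)‖
          ≤ ‖x' j n - x j n‖ + ‖x' k n - x k n‖ := by
        have heq2 : x j n - x k n - (x' j n - x' k n)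
            = (x' k n - x k n) - (x' j n - x j n) := by abel
        rw [heq2]
        calc ‖(x' k n - x k n) - (x' j n - x j n)‖
            ≤ ‖x' k n - x k n‖ + ‖x' j n - x j n‖ := norm_sub_le _ _
          _ = ‖x' j n - x j n‖ + ‖x' k n - x k n‖ := by ring
      linarith
    -- lower bounds on B' and Cn'
    have hmuj1 : (0:ℝ) < mu j + 1 := by linarith
    have hmujhalf : (0:ℝ) < mu j / 2 * Lj := by positivity
    have key1 : |t j n - t k n| / ((mu j + 1) * Lj) ≤ |t j n - t k n| / L'j :=
      div_le_div_of_nonneg_left (abs_nonneg _) L'j0 hhi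
    have key2 : (Sj * Lj) / L'j ≤ (Sj * Lj) / (mu j / 2 * Lj) :=
      div_le_div_of_nonneg_left (by positivity) hmujhalf hlo
    have key3 : (Sk * K * Lj) / L'j ≤ (Sk * K * Lj) / (mu j / 2 * Lj) :=
      div_le_div_of_nonneg_left (by positivity) hmujhalf hlo
    have key4 : ‖x j n - x k n‖ / ((mu j + 1) * Lj) ≤ ‖x j n - x k n‖ / L'j :=
      div_le_div_of_nonneg_left (norm_nonneg _) L'j0 hhi
    have key5 : (Yj * Lj) / L'j ≤ (Yj * Lj) / (mu j / 2 * Lj) :=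
      div_le_div_of_nonneg_left (by positivity) hmujhalf hlo
    have key6 : (Yk * K * Lj) / L'j ≤ (Yk * K * Lj) / (mu j / 2 * Lj) :=
      div_le_div_of_nonneg_left (by positivity) hmujhalf hlo
    have simp2 : (Sj * Lj) / (mu j / 2 * Lj) = (2 / mu j) * Sj := by
      field_simp
    have simp3 : (Sk * K * Lj) / (mu j / 2 * Lj) = (2 / mu j) * (K * Sk) := by
      field_simp
    have simp5 : (Yj * Lj) / (mu j / 2 * Lj) = (2 / mu j) * Yj := by
      field_simp
    have simp6 : (Yk * K * Lj) / (mu j / 2 * Lj) = (2 / mu j) * (K * Yk) := by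
      field_simp
    have simp1 : |t j n - t k n| / ((mu j + 1) * Lj) = B / (mu j + 1) := by
      rw [hB, div_div, mul_comm]
    have simp4 : ‖x j n - x k n‖ / ((mu j + 1) * Lj) = Cn / (mu j + 1) := by
      rw [hCn, div_div, mul_comm]
    have hB'lb : B / (mu j + 1) - (2 / mu j) * (Sj + K * Sk) ≤ B' := by
      have step : (|t j n - t k n| - Sj * Lj - Sk * K * Lj) / L'j ≤ B' := by
        rw [hB']
        exact (div_le_div_iff_of_pos_right L'j0).mpr htri
      rw [sub_div, sub_div] at step
      rw [simp2] at key2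
      rw [simp3] at key3
      rw [simp1] at key1
      linarith
    have hCn'lb : Cn / (mu j + 1) - (2 / mu j) * (Yj + K * Yk) ≤ Cn' := by
      have step : (‖x j n - x k n‖ - Yj * Lj - Yk * K * Lj) / L'j ≤ Cn' := by
        rw [hCn']
        exact (div_le_div_iff_of_pos_right L'j0).mpr hxtri
      rw [sub_div, sub_div] at step
      rw [simp5] at key5
      rw [simp6] at key6
      rw [simp4] at key4
      linarith
    -- conclude
    have hBC : (mu j + 1) * (C' + (2 / mu j) * E) ≤ B + Cn := by
      simp only [hD] at hF
      linarith
    have hdiv : C' + (2 / mu j) * E ≤ (B + Cn) / (mu j + 1) := by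
      rw [le_div_iff₀ hmuj1, mul_comm]
      exact hBC
    have hsplit : (B + Cn) / (mu j + 1) = B / (mu j + 1) + Cn / (mu j + 1) :=
      add_div _ _ _
    have hEexp : (2 / mu j) * (Sj + K * Sk) + (2 / mu j) * (Yj + K * Yk)
        = (2 / mu j) * E := by
      rw [hE]; ring
    have hfin : C' ≤ B' + Cn' := by linarith
    linarith
end
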